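/- There exists no 𝔤-module V, for 𝔤 = 𝔰𝔳(1/2), together with an element w ∈ V such that the ℂ-linear map from the polynomial ring ℂ[x,y] to V sending a polynomial p(x,y) to p(ρ(L₀),ρ(M₀))·w is bijective; that is, the class of free U(ℂL₀ ⊕ ℂM₀)-modules of rank 1 over the Schrödinger–Virasoro algebra 𝔰𝔳(1/2) is empty. -/

import Mathlib

/-- Evaluation of a two-variable polynomial `p(x,y)` at two operators `A, B`, applied to a
vector `w`: `p(A,B)·w` (when `A,B` commute, this is the usual substitution). -/
noncomputable def evalP2 {V : Type*} [AddCommGroup V] [Module ℂ V]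
    (A B : Module.End ℂ V) (w : V) (p : MvPolynomial (Fin 2) ℂ) : V :=
  (AddMonoidAlgebra.coeff p).sum fun d c => c • ((A ^ d 0 * B ^ d 1) w)

open MvPolynomial

namespace SV19

abbrev P2 := MvPolynomial (Fin 2) ℂ

noncomputable def shiftc (c : ℂ) : P2 →ₐ[ℂ] P2 :=
  MvPolynomial.aeval ![X 0 - MvPolynomial.C c, X 1]

@[simp] lemma shiftc_X0 (c : ℂ) : shiftc c (X 0) = X 0 - MvPolynomial.C c := by
  simp [shiftc]

@[simp] lemma shiftc_X1 (c : ℂ) : shiftc c (X 1) = X 1 := by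
  simp [shiftc]

variable {V : Type*} [AddCommGroup V] [Module ℂ V]

noncomputable def Emap (A B : Module.End ℂ V) (w : V) : P2 →ₗ[ℂ] V :=
  Finsupp.linearCombination ℂ (fun d : Fin 2 →₀ ℕ => (A ^ d 0 * B ^ d 1) w) ∘ₗ
    (AddMonoidAlgebra.coeffLinearEquiv ℂ).toLinearMap

lemma evalP2_eq (A B : Module.End ℂ V) (w : V) : evalP2 A B w = ⇑(Emap A B w) := rfl

lemma evalP2_monomial (A B : Module.End ℂ V) (w : V) (d : Fin 2 →₀ ℕ) (a : ℂ) :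
    evalP2 A B w (monomial d a) = a • ((A ^ d 0 * B ^ d 1) w) := by
  unfold evalP2; rw [sum_monomial_eq]; simp

lemma evalP2_one (A B : Module.End ℂ V) (w : V) : evalP2 A B w 1 = w := by
  have : (1 : P2) = monomial 0 1 := by simp [monomial_zero']
  rw [this, evalP2_monomial]; simp

-- X0 * monomial
lemma X0_mul_monomial (d : Fin 2 →₀ ℕ) (a : ℂ) :
    (X 0 : P2) * monomial d a = monomial (d + Finsupp.single 0 1) a := by
  rw [X, monomial_mul, one_mul, add_comm]

lemma evalP2_X0_mul (A B : Module.End ℂ V) (hAB : A * B = B * A) (w : V) (q : P2) :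
    evalP2 A B w (X 0 * q) = A (evalP2 A B w q) := by
  induction q using MvPolynomial.induction_on' with
  | monomial d a =>
    rw [X0_mul_monomial, evalP2_monomial, evalP2_monomial]
    have h0 : (d + Finsupp.single 0 1 : Fin 2 →₀ ℕ) 0 = d 0 + 1 := by simp
    have h1 : (d + Finsupp.single 0 1 : Fin 2 →₀ ℕ) 1 = d 1 := by simp
    rw [h0, h1, map_smul, pow_succ', mul_assoc, Module.End.mul_apply]
  | add p q hp hq =>
    rw [mul_add, evalP2_eq, map_add, map_add, ← evalP2_eq, hp, hq, map_add]

lemma evalP2_X1_mul (A B : Module.End ℂ V) (hAB : A * B = B * A) (w : V) (q : P2) :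
    evalP2 A B w (X 1 * q) = B (evalP2 A B w q) := by
  induction q using MvPolynomial.induction_on' with
  | monomial d a =>
    rw [show (X 1 : P2) * monomial d a = monomial (d + Finsupp.single 1 1) a by
      rw [X, monomial_mul, one_mul, add_comm]]
    rw [evalP2_monomial, evalP2_monomial]
    have h0 : (d + Finsupp.single 1 1 : Fin 2 →₀ ℕ) 0 = d 0 := by simp
    have h1 : (d + Finsupp.single 1 1 : Fin 2 →₀ ℕ) 1 = d 1 + 1 := by simp
    have hc : Commute A B := hAB
    have key : A ^ d 0 * B ^ (d 1 + 1) = B * (A ^ d 0 * B ^ d 1) := by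
      rw [pow_succ', ← mul_assoc, ← mul_assoc, (hc.symm.pow_right (d 0)).eq]
    rw [h0, h1, map_smul, key, Module.End.mul_apply]
  | add p q hp hq =>
    rw [mul_add, evalP2_eq, map_add, map_add, ← evalP2_eq, hp, hq, map_add]

end SV19

namespace SV19

variable {V : Type*} [AddCommGroup V] [Module ℂ V]

lemma evalP2_Xc_mul (A B : Module.End ℂ V) (hAB : A * B = B * A) (w : V) (c : ℂ) (q : P2) :
    evalP2 A B w ((X 0 - MvPolynomial.C c) * q) = (A - c • 1) (evalP2 A B w q) := by
  rw [sub_mul, C_mul', evalP2_eq, map_sub, map_smul, ← evalP2_eq,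
    evalP2_X0_mul A B hAB]
  simp [LinearMap.sub_apply]

lemma evalP2_pows_mul (A B : Module.End ℂ V) (hAB : A * B = B * A) (w : V) (c : ℂ)
    (i j : ℕ) (q : P2) :
    evalP2 A B w ((X 0 - MvPolynomial.C c) ^ i * (X 1) ^ j * q)
      = (((A - c • 1) ^ i) * (B ^ j)) (evalP2 A B w q) := by
  induction i with
  | zero =>
    simp only [pow_zero, one_mul, Module.End.mul_apply]
    induction j with
    | zero => simp
    | succ j hj =>
      rw [show (X 1 : P2) ^ (j+1) * q = X 1 * (X 1 ^ j * q) by ring,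
        evalP2_X1_mul A B hAB, hj, pow_succ', Module.End.mul_apply]
  | succ i hi =>
    rw [pow_succ, show (X 0 - MvPolynomial.C c) ^ i * (X 0 - MvPolynomial.C c) * X 1 ^ j * q
        = (X 0 - MvPolynomial.C c) * ((X 0 - MvPolynomial.C c) ^ i * X 1 ^ j * q) by ring,
      evalP2_Xc_mul A B hAB, hi]
    have : (A - c • 1) ^ (i + 1) * B ^ j
        = (A - c • 1) * ((A - c • 1) ^ i * B ^ j) := by
      rw [pow_succ', mul_assoc]
    rw [this]
    simp [Module.End.mul_apply]

lemma key (A B : Module.End ℂ V) (hAB : A * B = B * A) (w : V)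
    (T : Module.End ℂ V) (c : ℂ)
    (hTA : T * A = (A - c • 1) * T) (hTB : T * B = B * T)
    (q : P2) (hq : evalP2 A B w q = T w) (p : P2) :
    T (evalP2 A B w p) = evalP2 A B w (shiftc c p * q) := by
  induction p using MvPolynomial.induction_on' with
  | monomial d a =>
    have hTA' : ∀ i : ℕ, T * A ^ i = (A - c • 1) ^ i * T := by
      intro i
      induction i with
      | zero => simp
      | succ i hi =>
        rw [pow_succ, ← mul_assoc, hi, mul_assoc, hTA, ← mul_assoc, ← pow_succ]
    have hcTB : Commute T B := hTB
    have hTB' : ∀ j : ℕ, T * B ^ j = B ^ j * T := fun j => (hcTB.pow_right j).eq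
    have hop : T * (A ^ d 0 * B ^ d 1) = ((A - c • 1) ^ d 0 * B ^ d 1) * T := by
      rw [← mul_assoc, hTA' (d 0), mul_assoc, hTB' (d 1), ← mul_assoc]
    have hsh : shiftc c (monomial d a)
        = MvPolynomial.C a * ((X 0 - MvPolynomial.C c) ^ d 0 * (X 1) ^ d 1) := by
      rw [shiftc, aeval_monomial]
      rw [Finsupp.prod_fintype _ _ (fun i => pow_zero _), Fin.prod_univ_two]
      simp
    rw [evalP2_monomial, hsh, mul_assoc, C_mul']
    rw [show evalP2 A B w (a • (((X 0 - MvPolynomial.C c) ^ d 0 * X 1 ^ d 1) * q))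
        = a • evalP2 A B w (((X 0 - MvPolynomial.C c) ^ d 0 * X 1 ^ d 1) * q) from
      map_smul (Emap A B w) _ _]
    rw [evalP2_pows_mul A B hAB, hq, map_smul]
    congr 1
    rw [show ((A - c • 1) ^ d 0 * B ^ d 1) (T w) = (((A - c • 1) ^ d 0 * B ^ d 1) * T) w from rfl,
      ← hop]
    rfl
  | add p q' hp hq' =>
    have h1 : evalP2 A B w (p + q') = evalP2 A B w p + evalP2 A B w q' :=
      map_add (Emap A B w) _ _
    have h2 : evalP2 A B w (shiftc c p * q + shiftc c q' * q)
        = evalP2 A B w (shiftc c p * q) + evalP2 A B w (shiftc c q' * q) :=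
      map_add (Emap A B w) _ _
    rw [h1, map_add, hp, hq', map_add, add_mul, h2]

open Polynomial in
lemma const_of_taylor_one {R : Type*} [CommRing R] [IsDomain R] [CharZero R]
    (G : R[X]) (hG : taylor (1 : R) G = G) : ∃ a, G = Polynomial.C a := by
  have he : ∀ s : R, G.eval (s + 1) = G.eval s := fun s => by
    conv_rhs => rw [← hG]
    rw [taylor_eval]
  refine ⟨G.eval 0, ?_⟩
  have hQ : ∀ n : ℕ, (G - Polynomial.C (G.eval 0)).IsRoot (n : R) := by
    intro n
    induction n with
    | zero => simp [IsRoot]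
    | succ n ih =>
      simp only [IsRoot, Polynomial.eval_sub, Polynomial.eval_C] at ih ⊢
      push_cast
      rw [he]
      exact ih
  have h0 : (G - Polynomial.C (G.eval 0)) = 0 := by
    apply Polynomial.eq_zero_of_infinite_isRoot
    apply Set.infinite_of_injective_forall_mem (f := fun n : ℕ => (n : R))
      Nat.cast_injective
    intro n
    exact hQ n
  have := sub_eq_zero.mp h0
  exact this

open Polynomial in
lemma taylor_ne_zero' {R : Type*} [CommRing R] {p : R[X]} (r : R) (hp : p ≠ 0) :
    taylor r p ≠ 0 := fun h0 => hp (by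
  have := congrArg (taylor (-r)) h0
  rwa [taylor_taylor, neg_add_cancel, taylor_zero, map_zero] at this)

open Polynomial in
lemma poly_endgame {R : Type*} [CommRing R] [IsDomain R] [CharZero R]
    (F H H0 : R[X]) (Yc : R) (hYc : Yc ≠ 0) (hF : F ≠ 0) (hH : H ≠ 0)
    (a : R) (ha : a + a = 1)
    (hI : taylor a H0 * H - taylor (-a) H * H0 = Polynomial.C Yc)
    (hII : taylor a F * H = taylor (-1 : R) H * F)
    (hIII : taylor (-a) F * H0 = taylor (-1 : R) H0 * F) : False := by
  have hII2 : taylor (1 : R) F * taylor a H = taylor (a + -1) H * taylor a F := by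
    have h := congrArg (taylor a) hII
    rwa [taylor_mul, taylor_mul, taylor_taylor, taylor_taylor, ha] at h
  have htaF : taylor a F ≠ 0 := taylor_ne_zero' a hF
  have hstar : taylor (1 : R) F * taylor a H * H = taylor (a + -1) H * taylor (-1 : R) H * F := by
    apply mul_right_cancel₀ htaF
    calc taylor (1 : R) F * taylor a H * H * taylor a F
        = (taylor (1 : R) F * taylor a H) * (taylor a F * H) := by ring
      _ = (taylor (a + -1) H * taylor a F) * (taylor (-1 : R) H * F) := by rw [hII2, hII]
      _ = taylor (a + -1) H * taylor (-1 : R) H * F * taylor a F := by ring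
  set G : R[X] := F * taylor (a + -1) H * taylor (-1 : R) H with hGdef
  have hG1 : taylor (1 : R) G = G := by
    rw [hGdef, taylor_mul, taylor_mul, taylor_taylor, taylor_taylor,
      show (1 : R) + (a + -1) = a by ring, show (1 : R) + -1 = 0 by ring, taylor_zero]
    calc taylor (1:R) F * taylor a H * H
        = taylor (a + -1) H * taylor (-1 : R) H * F := hstar
      _ = F * taylor (a + -1) H * taylor (-1:R) H := by ring
  obtain ⟨gc, hGc⟩ := const_of_taylor_one G hG1
  have hd : F.natDegree + ((taylor (a + -1) H).natDegree + (taylor (-1:R) H).natDegree) = 0 := by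
    have hne1 : taylor (a + -1) H ≠ 0 := taylor_ne_zero' _ hH
    have hne2 : taylor (-1 : R) H ≠ 0 := taylor_ne_zero' _ hH
    have := congrArg Polynomial.natDegree hGc
    rwa [hGdef, mul_assoc, natDegree_mul hF (mul_ne_zero hne1 hne2),
      natDegree_mul hne1 hne2, natDegree_C] at this
  have hdF : F.natDegree = 0 := by omega
  have hdH : H.natDegree = 0 := by
    have := hd
    rw [natDegree_taylor, natDegree_taylor] at this
    omega
  have hFc : F = Polynomial.C (F.coeff 0) := eq_C_of_natDegree_eq_zero hdF
  have hHc : H = Polynomial.C (H.coeff 0) := eq_C_of_natDegree_eq_zero hdH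
  have hfc0 : F.coeff 0 ≠ 0 := fun h => hF (by rw [hFc, h, map_zero])
  have hCF : (Polynomial.C (F.coeff 0) : R[X]) ≠ 0 := by
    rw [← hFc]; exact hF
  -- H0 is shift invariant
  have hH0inv : taylor (-1 : R) H0 = H0 := by
    have h3 := hIII
    rw [hFc, taylor_C] at h3
    -- C fc * H0 = taylor (-1) H0 * C fc
    have : Polynomial.C (F.coeff 0) * H0 = Polynomial.C (F.coeff 0) * taylor (-1 : R) H0 := by
      rw [h3]; ring
    exact (mul_left_cancel₀ hCF this).symm
  have hH0inv1 : taylor (1 : R) H0 = H0 := by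
    conv_lhs => rw [← hH0inv]
    rw [taylor_taylor]
    norm_num
  obtain ⟨h0c, hH0c⟩ := const_of_taylor_one H0 hH0inv1
  rw [hHc, hH0c, taylor_C, taylor_C] at hI
  rw [mul_comm, sub_self] at hI
  exact hYc (by simpa using hI.symm)

noncomputable abbrev R1 := MvPolynomial (Fin 1) ℂ

noncomputable def Phi : P2 ≃ₐ[ℂ] Polynomial R1 := MvPolynomial.finSuccEquiv ℂ 1

instance : CharZero R1 :=
  charZero_of_injective_algebraMap (MvPolynomial.C_injective (Fin 1) ℂ)

open Polynomial in
lemma Phi_shiftc (c : ℂ) (p : P2) :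
    Phi (shiftc c p) = taylor (MvPolynomial.C (-c) : R1) (Phi p) := by
  have : (Phi.toAlgHom.comp (shiftc c) : P2 →ₐ[ℂ] Polynomial R1)
      = ((taylorAlgHom (MvPolynomial.C (-c) : R1)).restrictScalars ℂ).comp Phi.toAlgHom := by
    apply MvPolynomial.algHom_ext
    intro i
    match i with
    | 0 =>
      simp only [AlgHom.comp_apply, AlgEquiv.toAlgHom_eq_coe, AlgHom.coe_coe, AlgEquiv.coe_toAlgHom,
        AlgHom.coe_restrictScalars', shiftc_X0, map_sub]
      rw [show Phi (X 0) = Polynomial.X from MvPolynomial.finSuccEquiv_X_zero,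
        show Phi (MvPolynomial.C c) = Polynomial.C (MvPolynomial.C c) by
          simp [Phi, MvPolynomial.finSuccEquiv_apply]]
      rw [show (taylorAlgHom (MvPolynomial.C (-c) : R1)) Polynomial.X
          = taylor (MvPolynomial.C (-c) : R1) Polynomial.X from rfl, taylor_X, map_neg,
        Polynomial.C_neg]
      ring
    | 1 =>
      simp only [AlgHom.comp_apply, AlgEquiv.toAlgHom_eq_coe, AlgHom.coe_coe, AlgEquiv.coe_toAlgHom,
        AlgHom.coe_restrictScalars', shiftc_X1]
      rw [show Phi (X 1) = Polynomial.C (X 0) by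
          rw [show (1 : Fin 2) = Fin.succ 0 from rfl, Phi, MvPolynomial.finSuccEquiv_X_succ],
        show (taylorAlgHom (MvPolynomial.C (-c) : R1)) (Polynomial.C (X 0))
          = taylor (MvPolynomial.C (-c) : R1) (Polynomial.C (X 0)) from rfl, taylor_C]
  exact congrFun (congrArg (fun (f : P2 →ₐ[ℂ] Polynomial R1) => ⇑f) this) p

lemma Phi_X1 : Phi (X 1) = Polynomial.C (X 0 : R1) := by
  rw [show (1 : Fin 2) = Fin.succ 0 from rfl, Phi, MvPolynomial.finSuccEquiv_X_succ]

end SV19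

namespace SV19

variable {V : Type*} [AddCommGroup V] [Module ℂ V]

lemma bracket_identity (A B : Module.End ℂ V) (hAB : A * B = B * A) (w : V)
    (T1 T2 : Module.End ℂ V) (c1 c2 : ℂ)
    (h1A : T1 * A = (A - c1 • 1) * T1) (h1B : T1 * B = B * T1)
    (h2A : T2 * A = (A - c2 • 1) * T2) (h2B : T2 * B = B * T2)
    (q1 q2 : P2) (hq1 : evalP2 A B w q1 = T1 w) (hq2 : evalP2 A B w q2 = T2 w) :
    evalP2 A B w (shiftc c1 q2 * q1 - shiftc c2 q1 * q2) = T1 (T2 w) - T2 (T1 w) := by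
  have e1 := key A B hAB w T1 c1 h1A h1B q1 hq1 q2
  have e2 := key A B hAB w T2 c2 h2A h2B q2 hq2 q1
  have hsub : evalP2 A B w (shiftc c1 q2 * q1 - shiftc c2 q1 * q2)
      = evalP2 A B w (shiftc c1 q2 * q1) - evalP2 A B w (shiftc c2 q1 * q2) :=
    map_sub (Emap A B w) _ _
  rw [hsub, ← e1, ← e2, hq1, hq2]

end SV19


open SV19 MvPolynomial

attribute [local instance] LieRing.ofAssociativeRing

/-- There is no `𝔰𝔳(1/2)`-module `V` with a `w ∈ V` such that `p(x,y) ↦ p(ρL₀,ρM₀)·w`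
is a bijection `ℂ[x,y] → V`: the class of free `U(ℂL₀ ⊕ ℂM₀)`-modules of rank 1 over
the Schrödinger–Virasoro algebra `𝔰𝔳(1/2)` is empty. Here the half-integer index
`p ∈ ℤ + 1/2` of `Y_p` is encoded as `p = k + 1/2` with `k ∈ ℤ`, so `Y k` stands
for `Y_{k+1/2}`. -/
theorem stmt19
    -- `𝔤 = 𝔰𝔳(1/2)`: a complex Lie algebra with basis
    -- `{L n, M n : n ∈ ℤ} ∪ {Y_{k+1/2} : k ∈ ℤ}` ...
    (g : Type*) [LieRing g] [LieAlgebra ℂ g] (L M Y : ℤ → g)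
    (B : Module.Basis (Fin 3 × ℤ) ℂ g)
    (hB : ∀ n : ℤ, B (0, n) = L n ∧ B (1, n) = M n ∧ B (2, n) = Y n)
    -- ... and brackets (with `Y k` standing for `Y_{k+1/2}`):
    (hLL : ∀ n m : ℤ, ⁅L n, L m⁆ = ((m : ℂ) - (n : ℂ)) • L (m + n))
    (hLY : ∀ n k : ℤ, ⁅L n, Y k⁆ = (((k : ℂ) + 1 / 2) - (n : ℂ) / 2) • Y (k + n))
    (hLM : ∀ n m : ℤ, ⁅L n, M m⁆ = (m : ℂ) • M (m + n))
    (hYY : ∀ k l : ℤ, ⁅Y k, Y l⁆ = ((l : ℂ) - (k : ℂ)) • M (k + l + 1))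
    (hYM : ∀ k m : ℤ, ⁅Y k, M m⁆ = 0)
    (hMM : ∀ n m : ℤ, ⁅M n, M m⁆ = 0)
    -- then no `𝔤`-module `V` is a free `U(ℂL₀ ⊕ ℂM₀)`-module of rank 1:
    (V : Type*) [AddCommGroup V] [Module ℂ V] [LieRingModule g V] [LieModule ℂ g V]
    (w : V) :
    ¬ Function.Bijective (evalP2 (LieModule.toEnd ℂ g V (L 0))
        (LieModule.toEnd ℂ g V (M 0)) w) := by
  intro hbij
  set ρ := LieModule.toEnd ℂ g V with hρ
  set A : Module.End ℂ V := ρ (L 0) with hA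
  set Bo : Module.End ℂ V := ρ (M 0) with hBo
  have rho_lie : ∀ x y : g, ρ ⁅x, y⁆ = ρ x * ρ y - ρ y * ρ x := fun x y => by
    rw [LieHom.map_lie, Ring.lie_def]
  have hAB : A * Bo = Bo * A := by
    have h1 : ρ ⁅L 0, M 0⁆ = A * Bo - Bo * A := rho_lie _ _
    rw [hLM 0 0] at h1
    simp only [Int.cast_zero, zero_smul, map_zero] at h1
    exact (sub_eq_zero.mp h1.symm)
  have hcommA : ∀ (Z : g) (c : ℂ), ⁅L 0, Z⁆ = c • Z → (ρ Z) * A = (A - c • 1) * (ρ Z) := by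
    intro Z c hZ
    have h1 : ρ ⁅L 0, Z⁆ = A * (ρ Z) - (ρ Z) * A := rho_lie _ _
    rw [hZ, map_smul] at h1
    have h2 : (A - c • 1) * (ρ Z) = A * (ρ Z) - c • (ρ Z) := by
      rw [sub_mul, smul_mul_assoc, one_mul]
    rw [h2, h1]
    abel
  have hcommB : ∀ Z : g, ⁅M 0, Z⁆ = 0 → (ρ Z) * Bo = Bo * (ρ Z) := by
    intro Z hZ
    have h1 : ρ ⁅M 0, Z⁆ = Bo * (ρ Z) - (ρ Z) * Bo := rho_lie _ _
    rw [hZ, map_zero] at h1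
    exact (sub_eq_zero.mp h1.symm).symm
  have bLM1 : ⁅L 0, M 1⁆ = (1 : ℂ) • M 1 := by rw [hLM 0 1]; norm_num
  have bLYm1 : ⁅L 0, Y (-1)⁆ = (-(1/2) : ℂ) • Y (-1) := by rw [hLY 0 (-1)]; norm_num
  have bLY0 : ⁅L 0, Y 0⁆ = ((1/2) : ℂ) • Y 0 := by rw [hLY 0 0]; norm_num
  have bLLm1 : ⁅L 0, L (-1)⁆ = (-1 : ℂ) • L (-1) := by rw [hLL 0 (-1)]; norm_num
  have bMM1 : ⁅M 0, M 1⁆ = 0 := hMM 0 1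
  have bMY : ∀ k : ℤ, ⁅M 0, Y k⁆ = 0 := fun k => by
    rw [← lie_skew, hYM k 0, neg_zero]
  have bML : ⁅M 0, L (-1)⁆ = 0 := by
    rw [← lie_skew, hLM (-1) 0]
    norm_num
  have bYY : ⁅Y (-1), Y 0⁆ = M 0 := by
    rw [hYY (-1) 0]
    norm_num
  have bLm1M1 : ⁅L (-1), M 1⁆ = M 0 := by
    rw [hLM (-1) 1]
    norm_num
  obtain ⟨f, hf⟩ := hbij.2 (ρ (M 1) w)
  obtain ⟨h, hh⟩ := hbij.2 (ρ (Y (-1)) w)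
  obtain ⟨h0, hh0⟩ := hbij.2 (ρ (Y 0) w)
  obtain ⟨gg, hgg⟩ := hbij.2 (ρ (L (-1)) w)
  have hEX1 : evalP2 A Bo w (X 1) = Bo w := by
    have hx := evalP2_X1_mul A Bo hAB w 1
    rwa [mul_one, evalP2_one] at hx
  have hbr : ∀ (Z1 Z2 : g) (c1 c2 : ℂ) (q1 q2 : P2),
      ⁅L 0, Z1⁆ = c1 • Z1 → ⁅L 0, Z2⁆ = c2 • Z2 →
      ⁅M 0, Z1⁆ = 0 → ⁅M 0, Z2⁆ = 0 →
      evalP2 A Bo w q1 = ρ Z1 w → evalP2 A Bo w q2 = ρ Z2 w →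
      evalP2 A Bo w (shiftc c1 q2 * q1 - shiftc c2 q1 * q2) = ρ ⁅Z1, Z2⁆ w := by
    intro Z1 Z2 c1 c2 q1 q2 h1 h2 h1' h2' hq1 hq2
    rw [bracket_identity A Bo hAB w (ρ Z1) (ρ Z2) c1 c2
      (hcommA Z1 c1 h1) (hcommB Z1 h1') (hcommA Z2 c2 h2) (hcommB Z2 h2') q1 q2 hq1 hq2,
      rho_lie]
    simp [LinearMap.sub_apply, Module.End.mul_apply]
  have pI : shiftc (-(1/2) : ℂ) h0 * h - shiftc ((1/2) : ℂ) h * h0 = X 1 := by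
    apply hbij.1
    rw [hbr (Y (-1)) (Y 0) (-(1/2)) (1/2) h h0 bLYm1 bLY0 (bMY _) (bMY _) hh hh0, bYY, hEX1]
  have pII : shiftc (-(1/2) : ℂ) f * h - shiftc (1 : ℂ) h * f = 0 := by
    apply hbij.1
    rw [hbr (Y (-1)) (M 1) (-(1/2)) 1 h f bLYm1 bLM1 (bMY _) bMM1 hh hf, hYM (-1) 1, map_zero]
    simp [evalP2_eq]
  have pIII : shiftc ((1/2) : ℂ) f * h0 - shiftc (1 : ℂ) h0 * f = 0 := by
    apply hbij.1
    rw [hbr (Y 0) (M 1) (1/2) 1 h0 f bLY0 bLM1 (bMY _) bMM1 hh0 hf, hYM 0 1, map_zero]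
    simp [evalP2_eq]
  have pIV : shiftc (-1 : ℂ) f * gg - shiftc (1 : ℂ) gg * f = X 1 := by
    apply hbij.1
    rw [hbr (L (-1)) (M 1) (-1) 1 gg f bLLm1 bLM1 bML bMM1 hgg hf, bLm1M1, hEX1]
  -- nonvanishing
  have hX1ne : (X 1 : P2) ≠ 0 := MvPolynomial.X_ne_zero 1
  have hfne : f ≠ 0 := by
    intro hz
    rw [hz, map_zero, zero_mul, mul_zero, sub_zero] at pIV
    exact hX1ne pIV.symm
  have hhne : h ≠ 0 := by
    intro hz
    rw [hz, mul_zero, map_zero, zero_mul, sub_zero] at pI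
    exact hX1ne pI.symm
  have hFne : Phi f ≠ 0 := fun hz => hfne (Phi.injective (by rw [hz, map_zero]))
  have hHne : Phi h ≠ 0 := fun hz => hhne (Phi.injective (by rw [hz, map_zero]))
  have ha : (MvPolynomial.C (1/2 : ℂ) : R1) + MvPolynomial.C (1/2 : ℂ) = 1 := by
    rw [← map_add]
    norm_num
  have hCm1 : (MvPolynomial.C (-1 : ℂ) : R1) = -1 := by simp
  have hCmhalf : (MvPolynomial.C (-(1/2) : ℂ) : R1) = -(MvPolynomial.C (1/2 : ℂ)) :=
    map_neg _ _
  apply poly_endgame (Phi f) (Phi h) (Phi h0) (X 0 : R1) (MvPolynomial.X_ne_zero 0)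
    hFne hHne (MvPolynomial.C (1/2 : ℂ)) ha
  · -- hI
    have h' := congrArg Phi pI
    rw [map_sub, map_mul, map_mul, Phi_shiftc, Phi_shiftc, Phi_X1] at h'
    rw [show (-(-(1/2) : ℂ)) = (1/2 : ℂ) by norm_num, hCmhalf] at h'
    exact h'
  · -- hII
    have h' := congrArg Phi pII
    rw [map_sub, map_mul, map_mul, Phi_shiftc, Phi_shiftc, map_zero] at h'
    rw [show (-(-(1/2) : ℂ)) = (1/2 : ℂ) by norm_num, hCm1] at h'
    exact sub_eq_zero.mp h'
  · -- hIII
    have h' := congrArg Phi pIII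
    rw [map_sub, map_mul, map_mul, Phi_shiftc, Phi_shiftc, map_zero] at h'
    rw [hCmhalf, hCm1] at h'
    exact sub_eq_zero.mp h'
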